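/- Let n >= 4 and let D_n be the Coxeter group of type D_n, realized as even-signed permutations with Coxeter element c = (-1 -2 ... -(n-1) 1 2 ... (n-1))(-n n). Suppose v is a noncrossing partition in NC(D_n,c) and k in +-[n-1] satisfies v(k) in {-n, n}. Let Y = {succ(k), succ^2(k), ..., succ^{n-1}(k)} be the set of the next n-1 elements after k in the clockwise cyclic order on +-[n-1]. Then no element of Y lies in the same cycle of v as k. -/

import Mathlib

/-!
Common definitions: reflection length (absolute length) with respect to a set `R` of
"reflections" in a group, the absolute order, joins in the noncrossing partition lattice
`NC(W,c) = [1,c]`, the noncrossing projection `piT`, and the pop-tsack torsing operator `popT`.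
-/

namespace PopTsack

variable {G : Type*} [Group G]

open scoped Classical

/-- The reflection length of `w` with respect to the set `R` of reflections:
the least `r` such that `w` is a product of `r` elements of `R`. -/
noncomputable def absLength (R : Set G) (w : G) : ℕ :=
  sInf {r : ℕ | ∃ l : List G, l.length = r ∧ (∀ t ∈ l, t ∈ R) ∧ l.prod = w}

/-- The absolute order: `v ≤_T w` iff `ℓ_T v + ℓ_T (w v⁻¹) = ℓ_T w`. -/
def absLe (R : Set G) (v w : G) : Prop :=
  absLength R v + absLength R (w * v⁻¹) = absLength R w

/-- `p` is the join, in the noncrossing partition lattice `NC(G,c)` (the interval `[1,c]`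
in absolute order), of the set `A ⊆ NC(G,c)`. -/
def IsNCJoin (R : Set G) (c : G) (A : Set G) (p : G) : Prop :=
  absLe R p c ∧ (∀ a ∈ A, absLe R a p) ∧
    ∀ q : G, absLe R q c → (∀ a ∈ A, absLe R a q) → absLe R p q

/-- The noncrossing projection `π_T(w,c)`: the join in `NC(G,c)` of the set of reflections
lying weakly below `w` in absolute order.  (By Brady–Watt, `NC(G,c)` is a lattice when `G` is a
finite Coxeter group and `c` a Coxeter element, so this join exists; the value is defined by
choice and defaults to `1` in the degenerate case where no join exists.) -/
noncomputable def piT (R : Set G) (c w : G) : G :=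
  if h : ∃ p : G, IsNCJoin R c {t | t ∈ R ∧ absLe R t w} p then h.choose else 1

/-- The Coxeter pop-tsack torsing operator `Pop_T(w,c) = w ⬝ π_T(w,c)⁻¹`. -/
noncomputable def popT (R : Set G) (c w : G) : G := w * (piT R c w)⁻¹

end PopTsack


namespace SignedPerm

/-- The carrier type for `±[n] = {-n, …, -1, 1, …, n}`: the pair `(k, b)` represents the
integer `k+1` if `b = true` and `-(k+1)` if `b = false`. -/
abbrev Idx (n : ℕ) := Fin n × Bool

variable {n : ℕ}

/-- The integer value in `±[n]` of an element of the carrier type. -/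
def val (x : Idx n) : ℤ := if x.2 then (x.1 : ℤ) + 1 else -((x.1 : ℤ) + 1)

/-- Negation on `±[n]`. -/
def neg (x : Idx n) : Idx n := (x.1, !x.2)

/-- Membership in the type-`D_n` Coxeter group, viewed inside the permutations of `±[n]`:
the permutations commuting with negation that send an even number of positive values to
negative values. -/
def MemD (w : Equiv.Perm (Idx n)) : Prop :=
  (∀ x : Idx n, w (neg x) = neg (w x)) ∧
  Even ((Finset.univ.filter fun x : Idx n => 0 < val x ∧ val (w x) < 0).card)

/-- The set of reflections of `D_n`: the permutations `(i j)(-i -j)` for `i, j ∈ ±[n]` with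
`i ∉ {j, -j}`. -/
def reflD (n : ℕ) : Set (Equiv.Perm (Idx n)) :=
  {t | ∃ x y : Idx n, x ≠ y ∧ x ≠ neg y ∧
        t = Equiv.swap x y * Equiv.swap (neg x) (neg y)}

/-- `c` is the Coxeter element `(-1 -2 ⋯ -(n-1) 1 2 ⋯ (n-1))(-n n)` of `D_n`. -/
def IsCoxD (c : Equiv.Perm (Idx n)) : Prop :=
  ∀ x : Idx n, val (c x) =
    if val x = (n : ℤ) then -(n : ℤ)
    else if val x = -(n : ℤ) then (n : ℤ)
    else if val x = (n : ℤ) - 1 then -1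
    else if val x = -((n : ℤ) - 1) then 1
    else if 0 < val x then val x + 1
    else val x - 1

/-- The cyclic successor in the clockwise cyclic order `-1, -2, …, -(n-1), 1, 2, …, n-1`
on `±[n-1]` (described on integer values). -/
def succD (n : ℕ) (j : ℤ) : ℤ :=
  if j = -((n : ℤ) - 1) then 1
  else if j = (n : ℤ) - 1 then -1
  else if j < 0 then j - 1
  else j + 1

/-- The cyclic predecessor in the clockwise cyclic order `-1, -2, …, -(n-1), 1, 2, …, n-1`
on `±[n-1]` (described on integer values). -/
def predD (n : ℕ) (j : ℤ) : ℤ :=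
  if j = 1 then -((n : ℤ) - 1)
  else if j = -1 then (n : ℤ) - 1
  else if j < 0 then j + 1
  else j - 1

end SignedPerm

open PopTsack SignedPerm

open PopTsack SignedPerm

namespace Aux

open SignedPerm

variable {n : ℕ}

lemma val_neg (x : Idx n) : val (neg x) = - val x := by
  cases x with
  | mk i b => cases b <;> simp [val, neg]

lemma neg_neg (x : Idx n) : neg (neg x) = x := by
  cases x with
  | mk i b => cases b <;> simp [neg]

lemma val_injective : Function.Injective (val (n := n)) := by
  rintro ⟨i, b⟩ ⟨j, d⟩ h
  cases b <;> cases d <;> simp [val] at h <;>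
    first
    | (ext <;> simp <;> omega)
    | (exfalso; have hi : (0:ℤ) ≤ (i:ℤ) := Int.ofNat_nonneg _
       have hj : (0:ℤ) ≤ (j:ℤ) := Int.ofNat_nonneg _
       omega)

lemma val_bounds (x : Idx n) : 1 ≤ |val x| ∧ |val x| ≤ n := by
  cases x with
  | mk i b =>
    have := i.isLt
    cases b <;> simp [val, abs] <;> omega

/-- inverse of `val` (junk outside range). -/
def unval (hn : 0 < n) (j : ℤ) : Idx n :=
  (⟨min (j.natAbs - 1) (n - 1), by omega⟩, decide (0 < j))

lemma val_unval (hn : 0 < n) {j : ℤ} (h1 : 1 ≤ |j|) (h2 : |j| ≤ n) :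
    val (unval hn j) = j := by
  rcases abs_cases j with ⟨he, _⟩ | ⟨he, _⟩ <;>
  · simp only [unval, val]
    have hna : (j.natAbs : ℤ) = |j| := Int.abs_eq_natAbs j ▸ rfl
    by_cases hj : 0 < j <;> simp [hj] <;> push_cast <;> omega

end Aux
namespace Aux
variable {n : ℕ}

/-- Range predicate: `j ∈ ±[n-1]`. -/
def Rng (n : ℕ) (j : ℤ) : Prop := (1 ≤ j ∧ j ≤ (n : ℤ) - 1) ∨ (1 ≤ -j ∧ -j ≤ (n : ℤ) - 1)

/-- position of `j` in the clockwise cyclic order. -/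
def q (n : ℕ) (j : ℤ) : ℤ := if j < 0 then -j - 1 else (n : ℤ) - 2 + j

lemma q_neg_val {j : ℤ} (h : j < 0) : q n j = -j - 1 := if_pos h
lemma q_pos_val {j : ℤ} (h : ¬ j < 0) : q n j = (n : ℤ) - 2 + j := if_neg h

lemma q_bounds (hn : 4 ≤ n) {j : ℤ} (h : Rng n j) :
    0 ≤ q n j ∧ q n j ≤ 2 * (n : ℤ) - 3 := by
  rcases lt_or_ge j 0 with hj | hj
  · rw [q_neg_val hj]; rcases h with h | h <;> omega
  · rw [q_pos_val (not_lt.mpr hj)]; rcases h with h | h <;> omega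

lemma q_inj (hn : 4 ≤ n) {a b : ℤ} (ha : Rng n a) (hb : Rng n b) (h : q n a = q n b) :
    a = b := by
  rcases lt_or_ge a 0 with h1 | h1 <;> rcases lt_or_ge b 0 with h2 | h2
  · rw [q_neg_val h1, q_neg_val h2] at h; omega
  · rw [q_neg_val h1, q_pos_val (not_lt.mpr h2)] at h
    rcases ha with ha | ha <;> rcases hb with hb | hb <;> omega
  · rw [q_pos_val (not_lt.mpr h1), q_neg_val h2] at h
    rcases ha with ha | ha <;> rcases hb with hb | hb <;> omega
  · rw [q_pos_val (not_lt.mpr h1), q_pos_val (not_lt.mpr h2)] at h; omega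

lemma q_neg' (hn : 4 ≤ n) {j : ℤ} (h : Rng n j) :
    q n (-j) = q n j + ((n : ℤ) - 1) ∨ q n (-j) = q n j - ((n : ℤ) - 1) := by
  rcases lt_or_ge j 0 with h1 | h1
  · rw [q_neg_val (j := j) h1, q_pos_val (j := -j) (by omega)]; omega
  · rcases h with h | h
    · rw [q_pos_val (j := j) (not_lt.mpr h1), q_neg_val (j := -j) (by omega)]; omega
    · omega

lemma succD_step (hn : 4 ≤ n) {j : ℤ} (h : Rng n j) :
    Rng n (succD n j) ∧
      ((q n j = 2*(n:ℤ) - 3 ∧ q n (succD n j) = 0) ∨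
       (q n j < 2*(n:ℤ) - 3 ∧ q n (succD n j) = q n j + 1)) := by
  unfold Rng at h ⊢
  unfold succD
  by_cases e1 : j = -((n:ℤ)-1)
  · rw [if_pos e1]
    subst e1
    rw [q_pos_val (j := 1) (by omega), q_neg_val (j := -((n:ℤ)-1)) (by omega)]
    omega
  · rw [if_neg e1]
    by_cases e2 : j = (n:ℤ)-1
    · rw [if_pos e2]
      subst e2
      rw [q_neg_val (j := -1) (by omega), q_pos_val (j := (n:ℤ)-1) (by omega)]
      omega
    · rw [if_neg e2]
      by_cases e3 : j < 0
      · rw [if_pos e3, q_neg_val (j := j) e3, q_neg_val (j := j - 1) (by omega)]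
        rcases h with h | h <;> omega
      · rw [if_neg e3, q_pos_val (j := j) e3, q_pos_val (j := j + 1) (by omega)]
        rcases h with h | h <;> omega

lemma succD_iter (hn : 4 ≤ n) {j : ℤ} (h : Rng n j) {i : ℕ} (hi : (i:ℤ) ≤ (n:ℤ) - 1) :
    Rng n ((succD n)^[i] j) ∧
      ∃ t : ℤ, (t = 0 ∨ t = 1) ∧
        q n ((succD n)^[i] j) = q n j + i - (2*(n:ℤ) - 2) * t := by
  induction i with
  | zero => exact ⟨h, 0, Or.inl rfl, by simp⟩
  | succ i ih =>
    obtain ⟨hr, t, ht, hq⟩ := ih (by push_cast at hi ⊢; omega)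
    rw [Function.iterate_succ_apply']
    obtain ⟨hr', hstep⟩ := succD_step hn hr
    refine ⟨hr', ?_⟩
    have hb := q_bounds hn h
    have hb' := q_bounds hn hr
    have hii : (i:ℤ) ≤ (n:ℤ) - 2 := by push_cast at hi; omega
    rcases hstep with ⟨h1, h2⟩ | ⟨h1, h2⟩ <;> rcases ht with rfl | rfl <;>
      simp only [mul_zero, mul_one, sub_zero] at hq
    · exact ⟨1, Or.inr rfl, by push_cast; rw [mul_one]; omega⟩
    · exact absurd h2 (by omega)
    · exact ⟨0, Or.inl rfl, by push_cast; rw [mul_zero]; omega⟩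
    · exact ⟨1, Or.inr rfl, by push_cast; rw [mul_one]; omega⟩

lemma succD_iter_ne (hn : 4 ≤ n) {j : ℤ} (h : Rng n j) {i : ℕ} (hi1 : 1 ≤ i)
    (hi2 : (i : ℤ) ≤ (n : ℤ) - 2) :
    (succD n)^[i] j ≠ j ∧ (succD n)^[i] j ≠ -j := by
  obtain ⟨hr, t, ht, hq⟩ := succD_iter hn h (i := i) (by omega)
  have hb := q_bounds hn h
  have hb' := q_bounds hn hr
  rcases ht with rfl | rfl <;> simp only [mul_zero, mul_one, sub_zero] at hq <;>
  refine ⟨fun he => ?_, fun he => ?_⟩ <;> rw [he] at hq <;>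
    rcases q_neg' hn h with hqn | hqn <;> omega

lemma Rng_iter (hn : 4 ≤ n) {j : ℤ} (h : Rng n j) {i : ℕ} (hi : (i:ℤ) ≤ (n:ℤ) - 1) :
    Rng n ((succD n)^[i] j) := (succD_iter hn h hi).1

end Aux
namespace Aux
open SignedPerm

variable {n : ℕ}

/-- The signed coordinate functional attached to a point of `±[n]`. -/
noncomputable def F (a : Idx n) : ((Fin n → ℝ) →ₗ[ℝ] ℝ) :=
  (if a.2 then (1:ℝ) else -1) • LinearMap.proj a.1

lemma F_apply (a : Idx n) (z : Fin n → ℝ) :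
    F a z = (if a.2 then (1:ℝ) else -1) * z a.1 := rfl

/-- The fixed space of a permutation of `±[n]`, as a subspace of `ℝⁿ`. -/
noncomputable def FixS (w : Equiv.Perm (Idx n)) : Submodule ℝ (Fin n → ℝ) :=
  ⨅ a : Idx n, LinearMap.ker (F (w a) - F a)

lemma mem_FixS {w : Equiv.Perm (Idx n)} {z : Fin n → ℝ} :
    z ∈ FixS w ↔ ∀ a : Idx n, F (w a) z = F a z := by
  simp [FixS, Submodule.mem_iInf, LinearMap.mem_ker, sub_eq_zero, LinearMap.sub_apply]

lemma FixS_one : FixS (1 : Equiv.Perm (Idx n)) = ⊤ := by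
  rw [eq_top_iff]; intro z _; rw [mem_FixS]; intro a; rfl

lemma FixS_mul_le (w₁ w₂ : Equiv.Perm (Idx n)) :
    FixS w₁ ⊓ FixS w₂ ≤ FixS (w₁ * w₂) := by
  intro z hz
  rw [Submodule.mem_inf, mem_FixS, mem_FixS] at hz
  rw [mem_FixS]
  intro a
  have : (w₁ * w₂) a = w₁ (w₂ a) := rfl
  rw [this, hz.1 (w₂ a), hz.2 a]

lemma FixS_inv_apply {w : Equiv.Perm (Idx n)} {z : Fin n → ℝ} (hz : z ∈ FixS w)
    (a : Idx n) : F (w⁻¹ a) z = F a z := by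
  rw [mem_FixS] at hz
  have := hz (w⁻¹ a)
  rw [show w (w⁻¹ a) = a from w.apply_symm_apply a] at this
  exact this.symm

lemma FixS_zpow {w : Equiv.Perm (Idx n)} {z : Fin n → ℝ} (hz : z ∈ FixS w) :
    ∀ (j : ℤ) (a : Idx n), F ((w ^ j) a) z = F a z := by
  have hnat : ∀ (i : ℕ) (a : Idx n), F ((w ^ i) a) z = F a z := by
    intro i
    induction i with
    | zero => intro a; simp
    | succ i ih =>
      intro a
      have : (w ^ (i+1)) a = (w ^ i) (w a) := by
        rw [pow_succ]; rfl
      rw [this, ih (w a), (mem_FixS.mp hz) a]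
  have hnat' : ∀ (i : ℕ) (a : Idx n), F ((w⁻¹ ^ i) a) z = F a z := by
    intro i
    induction i with
    | zero => intro a; simp
    | succ i ih =>
      intro a
      have : (w⁻¹ ^ (i+1)) a = (w⁻¹ ^ i) (w⁻¹ a) := by
        rw [pow_succ]; rfl
      rw [this, ih (w⁻¹ a), FixS_inv_apply hz]
  intro j a
  rcases le_or_gt 0 j with hj | hj
  · lift j to ℕ using hj
    rw [zpow_natCast]; exact hnat j a
  · obtain ⟨i, rfl⟩ : ∃ i : ℕ, j = -(i:ℤ) := ⟨j.natAbs, by omega⟩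
    rw [zpow_neg, zpow_natCast, ← inv_pow]
    exact hnat' i a

/-- Each reflection's fixed space contains an explicit hyperplane. -/
lemma refl_fix (t : Equiv.Perm (Idx n)) (ht : t ∈ reflD n) :
    ∃ ψ : (Fin n → ℝ) →ₗ[ℝ] ℝ, LinearMap.ker ψ ≤ FixS t := by
  obtain ⟨x, y, hxy, hxny, rfl⟩ := ht
  refine ⟨F x - F y, ?_⟩
  intro z hz
  rw [LinearMap.mem_ker, LinearMap.sub_apply, sub_eq_zero] at hz
  have hFnx : ∀ a : Idx n, F (neg a) z = - F a z := by
    intro a; cases a with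
    | mk i b => cases b <;> simp [F_apply, neg] <;> ring
  have hyx : y ≠ x := Ne.symm hxy
  have hnxny : neg x ≠ neg y := fun h => hxy (by
    have := congrArg neg h; rwa [neg_neg, neg_neg] at this)
  have happ : ∀ b : Idx n, (Equiv.swap x y * Equiv.swap (neg x) (neg y)) b
      = Equiv.swap x y (Equiv.swap (neg x) (neg y) b) := fun b => rfl
  have hninj : Function.Injective (neg (n := n)) := fun p q h => by
    have := congrArg neg h; rwa [neg_neg, neg_neg] at this
  have hbne : ∀ b : Idx n, b ≠ neg b := by
    rintro ⟨i, b⟩ h; cases b <;> simp [neg] at h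
  have hynx : y ≠ neg x := fun h => hxny (by rw [h, neg_neg])
  have hnxy : neg x ≠ y := Ne.symm hynx
  have hnyx : neg y ≠ x := Ne.symm hxny
  have hzn : F (neg x) z = F (neg y) z := by rw [hFnx, hFnx, hz]
  rw [mem_FixS]
  intro a
  rw [happ]
  by_cases h1 : a = x
  · rw [h1, Equiv.swap_apply_of_ne_of_ne (hbne x) hxny, Equiv.swap_apply_left]
    exact hz.symm
  · by_cases h2 : a = y
    · rw [h2, Equiv.swap_apply_of_ne_of_ne hynx (hbne y), Equiv.swap_apply_right]
      exact hz
    · by_cases h3 : a = neg x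
      · rw [h3, Equiv.swap_apply_left, Equiv.swap_apply_of_ne_of_ne hnyx (Ne.symm (hbne y))]
        exact hzn.symm
      · by_cases h4 : a = neg y
        · rw [h4, Equiv.swap_apply_right,
            Equiv.swap_apply_of_ne_of_ne (Ne.symm (hbne x)) hnxy]
          exact hzn
        · rw [Equiv.swap_apply_of_ne_of_ne h3 h4, Equiv.swap_apply_of_ne_of_ne h1 h2]

end Aux
namespace Aux
open SignedPerm

variable {n : ℕ}

lemma refl_neg_comm {t : Equiv.Perm (Idx n)} (ht : t ∈ reflD n) (a : Idx n) :
    t (neg a) = neg (t a) := by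
  obtain ⟨x, y, hxy, hxny, rfl⟩ := ht
  have hbne : ∀ b : Idx n, b ≠ neg b := by
    rintro ⟨i, b⟩ h; cases b <;> simp [neg] at h
  have hynx : y ≠ neg x := fun h => hxny (by rw [h, neg_neg])
  have hnxy : neg x ≠ y := Ne.symm hynx
  have hnyx : neg y ≠ x := Ne.symm hxny
  have happ : ∀ b : Idx n, (Equiv.swap x y * Equiv.swap (neg x) (neg y)) b
      = Equiv.swap x y (Equiv.swap (neg x) (neg y) b) := fun b => rfl
  have hne_of_neg : ∀ p q : Idx n, neg p ≠ neg q → p ≠ q := fun p q h hpq => h (by rw [hpq])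
  have hninj : ∀ p q : Idx n, p ≠ q → neg p ≠ neg q := fun p q h hpq => h (by
    have := congrArg neg hpq; rwa [neg_neg, neg_neg] at this)
  have exx : Equiv.swap x y x = y := Equiv.swap_apply_left _ _
  have exy : Equiv.swap x y y = x := Equiv.swap_apply_right _ _
  have enx : Equiv.swap (neg x) (neg y) (neg x) = neg y := Equiv.swap_apply_left _ _
  have eny : Equiv.swap (neg x) (neg y) (neg y) = neg x := Equiv.swap_apply_right _ _
  have fx : Equiv.swap (neg x) (neg y) x = x :=
    Equiv.swap_apply_of_ne_of_ne (hbne x) hxny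
  have fy : Equiv.swap (neg x) (neg y) y = y :=
    Equiv.swap_apply_of_ne_of_ne hynx (hbne y)
  have gnx : Equiv.swap x y (neg x) = neg x :=
    Equiv.swap_apply_of_ne_of_ne (Ne.symm (hbne x)) hnxy
  have gny : Equiv.swap x y (neg y) = neg y :=
    Equiv.swap_apply_of_ne_of_ne hnyx (Ne.symm (hbne y))
  rw [happ, happ]
  by_cases h1 : a = x
  · rw [h1, enx, gny, fx, exx]
  · by_cases h2 : a = y
    · rw [h2, eny, gnx, fy, exy]
    · by_cases h3 : a = neg x
      · rw [h3, neg_neg, fx, exx, enx, gny, neg_neg]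
      · by_cases h4 : a = neg y
        · rw [h4, neg_neg, fy, exy, eny, gnx, neg_neg]
        · have h1' : neg a ≠ neg x := hninj _ _ h1
          have h2' : neg a ≠ neg y := hninj _ _ h2
          have h3' : neg a ≠ x := fun h => h3 (by rw [← neg_neg a, h])
          have h4' : neg a ≠ y := fun h => h4 (by rw [← neg_neg a, h])
          rw [Equiv.swap_apply_of_ne_of_ne h1' h2', Equiv.swap_apply_of_ne_of_ne h3 h4,
            Equiv.swap_apply_of_ne_of_ne h3' h4', Equiv.swap_apply_of_ne_of_ne h1 h2]

lemma prod_refl_neg_comm {l : List (Equiv.Perm (Idx n))} (hl : ∀ t ∈ l, t ∈ reflD n)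
    (a : Idx n) : l.prod (neg a) = neg (l.prod a) := by
  induction l with
  | nil => simp
  | cons t l ih =>
    have h1 : (t :: l).prod = t * l.prod := List.prod_cons
    rw [h1]
    have : (t * l.prod) (neg a) = t (l.prod (neg a)) := rfl
    rw [this, ih (fun s hs => hl s (List.mem_cons_of_mem _ hs)),
      refl_neg_comm (hl t (List.mem_cons_self (a := t) (l := l)))]
    rfl

lemma reflD_inv_mem {t : Equiv.Perm (Idx n)} (ht : t ∈ reflD n) : t⁻¹ ∈ reflD n := by
  obtain ⟨x, y, hxy, hxny, rfl⟩ := ht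
  have hninj : ∀ p q : Idx n, p ≠ q → neg p ≠ neg q := fun p q h hpq => h (by
    have := congrArg neg hpq; rwa [neg_neg, neg_neg] at this)
  refine ⟨neg x, neg y, hninj _ _ hxy, ?_, ?_⟩
  · rw [neg_neg]; exact fun h => hxny (by rw [← h, neg_neg])
  · rw [mul_inv_rev, Equiv.swap_inv, Equiv.swap_inv, neg_neg, neg_neg]

end Aux
namespace Aux
open SignedPerm FiniteDimensional

variable {n : ℕ}

lemma finrank_inf_ker (A : Submodule ℝ (Fin n → ℝ)) (ψ : (Fin n → ℝ) →ₗ[ℝ] ℝ) :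
    Module.finrank ℝ A ≤ Module.finrank ℝ (A ⊓ LinearMap.ker ψ : Submodule ℝ (Fin n → ℝ)) + 1 := by
  classical
  set ψ' : A →ₗ[ℝ] ℝ := ψ.comp A.subtype with hψ'
  have h1 : Module.finrank ℝ (LinearMap.range ψ') + Module.finrank ℝ (LinearMap.ker ψ')
      = Module.finrank ℝ A := LinearMap.finrank_range_add_finrank_ker ψ'
  have h2 : Module.finrank ℝ (LinearMap.range ψ') ≤ 1 := by
    simpa using Submodule.finrank_le (LinearMap.range ψ')
  have h3 : LinearMap.ker ψ' = Submodule.comap A.subtype (LinearMap.ker ψ) := by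
    rw [hψ', LinearMap.ker_comp]
  have h4 : Submodule.map A.subtype (LinearMap.ker ψ') = A ⊓ LinearMap.ker ψ := by
    rw [h3, Submodule.map_comap_subtype]
  have h5 : Module.finrank ℝ (LinearMap.ker ψ')
      = Module.finrank ℝ (A ⊓ LinearMap.ker ψ : Submodule ℝ (Fin n → ℝ)) := by
    rw [← h4]
    exact LinearEquiv.finrank_eq
      (Submodule.equivMapOfInjective A.subtype (Submodule.injective_subtype A) (LinearMap.ker ψ'))
  omega

lemma finrank_FixS_prod (l : List (Equiv.Perm (Idx n))) (hl : ∀ t ∈ l, t ∈ reflD n) :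
    n ≤ Module.finrank ℝ (FixS l.prod) + l.length := by
  induction l with
  | nil =>
    rw [List.prod_nil, List.length_nil, add_zero, FixS_one, finrank_top ℝ (Fin n → ℝ),
      Module.finrank_fintype_fun_eq_card, Fintype.card_fin]
  | cons t l ih =>
    have hlen : (t :: l).length = l.length + 1 := rfl
    obtain ⟨ψ, hψ⟩ := refl_fix t (hl t (List.mem_cons_self (a := t) (l := l)))
    have hstep : FixS l.prod ⊓ LinearMap.ker ψ ≤ FixS ((t :: l).prod) := by
      rw [List.prod_cons]
      refine le_trans ?_ (FixS_mul_le t l.prod)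
      exact fun z hz => ⟨hψ hz.2, hz.1⟩
    have h1 := finrank_inf_ker (FixS l.prod) ψ
    have h2 : Module.finrank ℝ (FixS l.prod ⊓ LinearMap.ker ψ : Submodule ℝ (Fin n → ℝ))
        ≤ Module.finrank ℝ (FixS ((t :: l).prod)) := Submodule.finrank_mono hstep
    have h3 := ih (fun s hs => hl s (List.mem_cons_of_mem _ hs))
    omega

lemma finrank_ker_of_ne_zero {ψ : (Fin n → ℝ) →ₗ[ℝ] ℝ} (h : ψ ≠ 0) :
    Module.finrank ℝ (LinearMap.ker ψ) + 1 = n := by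
  have h1 : Module.finrank ℝ (LinearMap.range ψ) + Module.finrank ℝ (LinearMap.ker ψ)
      = Module.finrank ℝ (Fin n → ℝ) := LinearMap.finrank_range_add_finrank_ker ψ
  have h2 : 0 < Module.finrank ℝ (LinearMap.range ψ) := by
    rw [Module.finrank_pos_iff]
    obtain ⟨z, hz⟩ : ∃ z, ψ z ≠ 0 := by
      by_contra hco
      push_neg at hco
      exact h (LinearMap.ext fun z => hco z)
    exact ⟨⟨ψ z, z, rfl⟩, 0, fun hc => hz (congrArg Subtype.val hc)⟩
  have h3 : Module.finrank ℝ (LinearMap.range ψ) ≤ 1 := by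
    simpa using Submodule.finrank_le (LinearMap.range ψ)
  rw [Module.finrank_fintype_fun_eq_card, Fintype.card_fin] at h1
  omega

end Aux
namespace Aux
open SignedPerm

variable {n : ℕ}

/-- The double swap `(a b)(-a -b)` (values `a+1, b+1`). -/
def tau (a b : Fin n) : Equiv.Perm (Idx n) :=
  Equiv.swap (a, true) (b, true) * Equiv.swap (a, false) (b, false)

lemma tau_mem_reflD {a b : Fin n} (h : a ≠ b) : tau a b ∈ reflD n :=
  ⟨(a, true), (b, true), fun hc => h (congrArg Prod.fst hc),
    fun hc => h (congrArg Prod.fst hc), rfl⟩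

lemma tau_apply (a b : Fin n) (x : Fin n) (s : Bool) :
    tau a b (x, s) = ((if x = a then b else if x = b then a else x), s) := by
  have h : tau a b (x, s) = Equiv.swap (a, true) (b, true)
      (Equiv.swap (a, false) (b, false) (x, s)) := rfl
  rw [h]
  cases s <;> simp [Equiv.swap_apply_def, Prod.ext_iff] <;> split_ifs <;> simp_all

/-- The reflection `(n-1, -n)(-(n-1), n)`. -/
def sigma' (a b : Fin n) : Equiv.Perm (Idx n) :=
  Equiv.swap (a, true) (b, false) * Equiv.swap (a, false) (b, true)

lemma sigma'_mem_reflD {a b : Fin n} (h : a ≠ b) : sigma' a b ∈ reflD n :=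
  ⟨(a, true), (b, false), fun hc => h (congrArg Prod.fst hc),
    fun hc => h (congrArg Prod.fst hc), rfl⟩

lemma sigma'_apply (a b : Fin n) (hab : a ≠ b) (x : Fin n) (s : Bool) :
    sigma' a b (x, s) = (if x = a then (b, !s) else if x = b then (a, !s) else (x, s)) := by
  have h : sigma' a b (x, s) = Equiv.swap (a, true) (b, false)
      (Equiv.swap (a, false) (b, true) (x, s)) := rfl
  rw [h]
  cases s <;> simp [Equiv.swap_apply_def, Prod.ext_iff] <;> split_ifs <;> simp_all

end Aux
namespace Aux
open SignedPerm

variable {n : ℕ}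

lemma val_mk (j : ℕ) (h : j < n) (s : Bool) :
    val ((⟨j, h⟩ : Fin n), s) = if s then (j : ℤ) + 1 else -((j : ℤ) + 1) := by
  cases s <;> simp [val]

lemma Rng_val_of_ne (hn : 4 ≤ n) {x : Idx n} (h1 : val x ≠ (n:ℤ)) (h2 : val x ≠ -(n:ℤ)) :
    Rng n (val x) := by
  obtain ⟨⟨j, hj⟩, s⟩ := x
  rw [val_mk] at h1 h2 ⊢
  unfold Rng
  cases s <;> simp only [if_true, Bool.false_eq_true, if_false] at h1 h2 ⊢ <;> omega

lemma c_succ (hn : 4 ≤ n) (hc : IsCoxD (n := n) c) {x : Idx n} (hx : Rng n (val x)) :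
    val (c x) = succD n (val x) := by
  have h := hc x
  unfold Rng at hx
  rw [if_neg (by omega), if_neg (by omega)] at h
  rw [h]
  unfold succD
  split_ifs <;> omega

lemma c_pt (hn : 4 ≤ n) (hc : IsCoxD (n := n) c) {x : Idx n} (hx : Rng n (val x)) :
    c x = unval (by omega) (succD n (val x)) := by
  apply val_injective
  rw [c_succ hn hc hx]
  have hr : Rng n (succD n (val x)) := (succD_step hn hx).1
  rw [val_unval]
  · unfold Rng at hr; rcases hr with h | h <;> rcases abs_cases (succD n (val x)) with ⟨he,_⟩|⟨he,_⟩ <;> omega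
  · unfold Rng at hr; rcases hr with h | h <;> rcases abs_cases (succD n (val x)) with ⟨he,_⟩|⟨he,_⟩ <;> omega

lemma c_ne_one (hn : 4 ≤ n) (hc : IsCoxD (n := n) c) : c ≠ 1 := by
  intro h
  have hx := hc ((⟨n-1, by omega⟩ : Fin n), true)
  rw [h] at hx
  simp only [Equiv.Perm.coe_one, id_eq, val_mk, if_true] at hx
  have : ((n-1 : ℕ) : ℤ) = (n:ℤ) - 1 := by omega
  rw [this] at hx
  rw [if_pos (by omega)] at hx
  omega

lemma FixS_c_bot (hn : 4 ≤ n) (hc : IsCoxD (n := n) c) : FixS c = ⊥ := by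
  have hn' : 0 < n := by omega
  rw [eq_bot_iff]
  intro z hz
  rw [mem_FixS] at hz
  set fi : ℕ → Fin n := fun j => (⟨j % n, Nat.mod_lt j hn'⟩ : Fin n) with hfi
  have hvalT : ∀ (j : ℕ), j < n → val ((fi j, true) : Idx n) = (j:ℤ)+1 := by
    intro j hj
    have h0 : j % n = j := Nat.mod_eq_of_lt hj
    simp [hfi, val, h0]
  have hvalF : ∀ (j : ℕ), j < n → val ((fi j, false) : Idx n) = -((j:ℤ)+1) := by
    intro j hj
    have h0 : j % n = j := Nat.mod_eq_of_lt hj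
    simp [hfi, val, h0]
  have hFT : ∀ (j : ℕ), F ((fi j, true) : Idx n) z = z (fi j) := by
    intro j; simp [F_apply]
  have hFF : ∀ (j : ℕ), F ((fi j, false) : Idx n) z = -(z (fi j)) := by
    intro j; simp [F_apply]
  have hcpt : ∀ (j j' : ℕ) (s s' : Bool),
      val (c ((fi j, s) : Idx n)) = val (((fi j', s') : Idx n)) →
      c ((fi j, s) : Idx n) = ((fi j', s') : Idx n) := by
    intro j j' s s' hv
    exact val_injective hv
  have hstep : ∀ j : ℕ, j ≤ n - 3 → z (fi (j+1)) = z (fi j) := by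
    intro j hj
    have h := hz ((fi j, true) : Idx n)
    have hv := hc ((fi j, true) : Idx n)
    rw [hvalT j (by omega)] at hv
    rw [if_neg (by omega), if_neg (by omega), if_neg (by omega),
      if_neg (by omega), if_pos (by omega)] at hv
    have hcx := hcpt j (j+1) true true
      (by rw [hv, hvalT (j+1) (by omega)]; push_cast; ring)
    rw [hcx, hFT, hFT] at h
    exact h
  have hchain : ∀ j : ℕ, j ≤ n - 2 → z (fi j) = z (fi 0) := by
    intro j
    induction j with
    | zero => intro _; rfl
    | succ i ih =>
      intro hj
      rw [hstep i (by omega), ih (by omega)]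
  have hlast : -(z (fi 0)) = z (fi (n-2)) := by
    have h := hz ((fi (n-2), true) : Idx n)
    have hv := hc ((fi (n-2), true) : Idx n)
    rw [hvalT (n-2) (by omega)] at hv
    rw [if_neg (by omega), if_neg (by omega), if_pos (by omega)] at hv
    have hcx := hcpt (n-2) 0 true false
      (by rw [hv, hvalF 0 (by omega)]; norm_num)
    rw [hcx, hFF, hFT] at h
    exact h
  have hn0 : z (fi (n-1)) = 0 := by
    have h := hz ((fi (n-1), true) : Idx n)
    have hv := hc ((fi (n-1), true) : Idx n)
    rw [hvalT (n-1) (by omega)] at hv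
    rw [if_pos (by omega)] at hv
    have hcx := hcpt (n-1) (n-1) true false
      (by rw [hv, hvalF (n-1) (by omega)]; omega)
    rw [hcx, hFF, hFT] at h
    linarith
  have hz0 : z (fi 0) = 0 := by
    have h1 := hchain (n-2) (le_refl _)
    rw [h1] at hlast
    linarith
  simp only [Submodule.mem_bot]
  funext i
  have hi : i = fi i.val := Fin.ext (by simp [hfi, Nat.mod_eq_of_lt i.isLt])
  rcases Nat.lt_or_ge i.val (n-1) with hlt | hge
  · rw [hi, hchain i.val (by omega), hz0]
    rfl
  · have hieq : i.val = n-1 := by have := i.isLt; omega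
    rw [hi, hieq, hn0]
    rfl

end Aux
namespace Aux
open SignedPerm

variable {n : ℕ}

/-- canonical element of `Fin n`. -/
def fi (hn : 0 < n) (j : ℕ) : Fin n := ⟨j % n, Nat.mod_lt j hn⟩

lemma fi_val (hn : 0 < n) {j : ℕ} (hj : j < n) : (fi hn j).val = j := Nat.mod_eq_of_lt hj

lemma fi_eq_iff (hn : 0 < n) {j : ℕ} (hj : j < n) (x : Fin n) :
    x = fi hn j ↔ x.val = j := by
  constructor
  · intro h; rw [h, fi_val hn hj]
  · intro h; exact Fin.ext (by rw [fi_val hn hj, h])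

def Qlist (hn : 0 < n) : ℕ → List (Equiv.Perm (Idx n))
  | 0 => []
  | m+1 => Qlist hn m ++ [tau (fi hn m) (fi hn (m+1))]

lemma Qlist_length (hn : 0 < n) (m : ℕ) : (Qlist hn m).length = m := by
  induction m with
  | zero => rfl
  | succ i ih => simp [Qlist, ih]

lemma Qlist_refl (hn : 0 < n) (m : ℕ) (hm : m ≤ n - 1) :
    ∀ t ∈ Qlist hn m, t ∈ reflD n := by
  induction m with
  | zero => intro t ht; exact absurd ht (List.not_mem_nil (a := t))
  | succ i ih =>
    intro t ht
    rw [Qlist, List.mem_append] at ht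
    rcases ht with ht | ht
    · exact ih (by omega) t ht
    · rw [List.mem_singleton] at ht
      subst ht
      refine tau_mem_reflD (fun h => ?_)
      have h1 := fi_val hn (show i < n by omega)
      have h2 := fi_val hn (show i+1 < n by omega)
      rw [h] at h1; omega

lemma Q_apply (hn : 4 ≤ n) (m : ℕ) : ∀ (x : Fin n) (s : Bool), m ≤ n - 2 →
    (Qlist (by omega : 0 < n) m).prod (x, s) =
      ((if x.val < m then fi (by omega) (x.val + 1) else if x.val = m then fi (by omega) 0
        else x), s) := by
  have hn' : 0 < n := by omega
  induction m with
  | zero =>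
    intro x s _
    simp only [Qlist, List.prod_nil, Equiv.Perm.coe_one, id_eq]
    rw [if_neg (by omega)]
    by_cases h0 : x.val = 0
    · rw [if_pos h0, (fi_eq_iff hn' (by omega) x).mpr h0]
    · rw [if_neg h0]
  | succ m ih =>
    intro x s hm
    have hprod : (Qlist hn' (m+1)).prod
        = (Qlist hn' m).prod * tau (fi hn' m) (fi hn' (m+1)) := by
      rw [Qlist, List.prod_append, List.prod_singleton]
    have happly : (Qlist hn' (m+1)).prod (x, s)
        = (Qlist hn' m).prod (tau (fi hn' m) (fi hn' (m+1)) (x, s)) := by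
      rw [hprod]; rfl
    rw [happly, tau_apply]
    by_cases h1 : x = fi hn' m
    · rw [if_pos h1, ih (fi hn' (m+1)) s (by omega)]
      have hv : (fi hn' (m+1)).val = m + 1 := fi_val hn' (by omega)
      rw [if_neg (by omega), if_neg (by omega)]
      have hx : x.val = m := by rw [h1, fi_val hn' (by omega)]
      rw [if_pos (by omega)]
      have he : x.val + 1 = m + 1 := by omega
      rw [he]
    · by_cases h2 : x = fi hn' (m+1)
      · rw [if_neg h1, if_pos h2, ih (fi hn' m) s (by omega)]
        have hv : (fi hn' m).val = m := fi_val hn' (by omega)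
        rw [if_neg (by omega), if_pos hv]
        have hx : x.val = m + 1 := by rw [h2, fi_val hn' (by omega)]
        rw [if_neg (by omega), if_pos hx]
      · rw [if_neg h1, if_neg h2, ih x s (by omega)]
        have hxm : x.val ≠ m := fun h => h1 ((fi_eq_iff hn' (by omega) x).mpr h)
        have hxm1 : x.val ≠ m + 1 := fun h => h2 ((fi_eq_iff hn' (by omega) x).mpr h)
        by_cases h3 : x.val < m
        · rw [if_pos h3, if_pos (by omega)]
        · rw [if_neg h3, if_neg hxm, if_neg (by omega), if_neg hxm1]

end Aux
namespace Aux
open SignedPerm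

variable {n : ℕ}

def cList (hn : 4 ≤ n) : List (Equiv.Perm (Idx n)) :=
  Qlist (by omega) (n-2) ++
    [sigma' (fi (by omega) (n-2)) (fi (by omega) (n-1)),
     tau (fi (by omega) (n-2)) (fi (by omega) (n-1))]

lemma cList_length (hn : 4 ≤ n) : (cList hn).length = n := by
  rw [cList, List.length_append, Qlist_length]
  simp; omega

lemma fi_ne (hn : 4 ≤ n) : fi (by omega : 0 < n) (n-2) ≠ fi (by omega) (n-1) := by
  intro h
  have h1 := fi_val (show 0 < n by omega) (show n-2 < n by omega)
  have h2 := fi_val (show 0 < n by omega) (show n-1 < n by omega)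
  rw [h] at h1; omega

lemma cList_refl (hn : 4 ≤ n) : ∀ t ∈ cList hn, t ∈ reflD n := by
  intro t ht
  rw [cList, List.mem_append] at ht
  rcases ht with ht | ht
  · exact Qlist_refl _ (n-2) (by omega) t ht
  · rcases List.mem_pair.mp ht with rfl | rfl
    · exact sigma'_mem_reflD (fi_ne hn)
    · exact tau_mem_reflD (fi_ne hn)

lemma cList_prod (hn : 4 ≤ n) (hc : IsCoxD (n := n) c) : (cList hn).prod = c := by
  have hn' : 0 < n := by omega
  apply Equiv.ext
  rintro ⟨x, s⟩
  apply val_injective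
  -- compute the right side via hc
  have hvx := hc (x, s)
  -- compute the left side
  have hprod : (cList hn).prod = (Qlist (by omega : 0 < n) (n-2)).prod *
      (sigma' (fi (by omega) (n-2)) (fi (by omega) (n-1)) *
       tau (fi (by omega) (n-2)) (fi (by omega) (n-1))) := by
    rw [cList, List.prod_append]
    rfl
  have happ : (cList hn).prod (x, s) = (Qlist (by omega : 0 < n) (n-2)).prod
      (sigma' (fi (by omega) (n-2)) (fi (by omega) (n-1))
        (tau (fi (by omega) (n-2)) (fi (by omega) (n-1)) (x, s))) := by
    rw [hprod]; rfl
  have hvalT : ∀ (j : ℕ), j < n → val ((fi hn' j, true) : Idx n) = (j:ℤ)+1 := by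
    intro j hj
    have h0 := fi_val hn' hj
    simp [val, h0]
  have hvalF : ∀ (j : ℕ), j < n → val ((fi hn' j, false) : Idx n) = -((j:ℤ)+1) := by
    intro j hj
    have h0 := fi_val hn' hj
    simp [val, h0]
  have hvals : val ((x, s) : Idx n) = if s then (x.val : ℤ)+1 else -((x.val : ℤ)+1) := by
    cases s <;> simp [val]
  rw [happ, tau_apply]
  by_cases h1 : x = fi hn' (n-2)
  · subst h1
    rw [if_pos rfl, sigma'_apply _ _ (fi_ne hn), if_neg (Ne.symm (fi_ne hn)), if_pos rfl,
      Q_apply hn (n-2) _ _ (le_refl _)]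
    have hv2 : (fi hn' (n-2)).val = n-2 := fi_val hn' (by omega)
    rw [if_neg (by omega), if_pos hv2]
    cases s
    · have hvx := hc ((fi hn' (n-2), false) : Idx n)
      rw [hvalF (n-2) (by omega)] at hvx
      rw [if_neg (by omega), if_neg (by omega), if_neg (by omega), if_pos (by omega)] at hvx
      rw [hvx, Bool.not_false, hvalT 0 (by omega)]
      norm_num
    · have hvx := hc ((fi hn' (n-2), true) : Idx n)
      rw [hvalT (n-2) (by omega)] at hvx
      rw [if_neg (by omega), if_neg (by omega), if_pos (by omega)] at hvx
      rw [hvx, Bool.not_true, hvalF 0 (by omega)]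
      norm_num
  · by_cases h2 : x = fi hn' (n-1)
    · subst h2
      rw [if_neg h1, if_pos rfl, sigma'_apply _ _ (fi_ne hn), if_pos rfl,
        Q_apply hn (n-2) _ _ (le_refl _)]
      have hv2 : (fi hn' (n-1)).val = n-1 := fi_val hn' (by omega)
      rw [if_neg (by omega), if_neg (by omega)]
      cases s
      · have hvx := hc ((fi hn' (n-1), false) : Idx n)
        rw [hvalF (n-1) (by omega)] at hvx
        rw [if_neg (by omega), if_pos (by omega)] at hvx
        rw [hvx, Bool.not_false, hvalT (n-1) (by omega)]
        omega
      · have hvx := hc ((fi hn' (n-1), true) : Idx n)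
        rw [hvalT (n-1) (by omega)] at hvx
        rw [if_pos (by omega)] at hvx
        rw [hvx, Bool.not_true, hvalF (n-1) (by omega)]
        omega
    · rw [if_neg h1, if_neg h2, sigma'_apply _ _ (fi_ne hn), if_neg h1, if_neg h2,
        Q_apply hn (n-2) _ _ (le_refl _)]
      have hxm : x.val ≠ n-2 := fun h => h1 ((fi_eq_iff hn' (by omega) x).mpr h)
      have hxm1 : x.val ≠ n-1 := fun h => h2 ((fi_eq_iff hn' (by omega) x).mpr h)
      have hxlt : x.val < n - 2 := by have := x.isLt; omega
      rw [if_pos hxlt]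
      cases s
      · have hvx := hc ((x, false) : Idx n)
        have hvF : val ((x, false) : Idx n) = -((x.val : ℤ)+1) := by simp [val]
        rw [hvF] at hvx
        rw [if_neg (by omega), if_neg (by omega), if_neg (by omega), if_neg (by omega),
          if_neg (by omega)] at hvx
        rw [hvx, hvalF (x.val + 1) (by omega)]
        push_cast
        ring
      · have hvx := hc ((x, true) : Idx n)
        have hvT : val ((x, true) : Idx n) = (x.val : ℤ)+1 := by simp [val]
        rw [hvT] at hvx
        rw [if_neg (by omega), if_neg (by omega), if_neg (by omega), if_neg (by omega),
          if_pos (by omega)] at hvx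
        rw [hvx, hvalT (x.val + 1) (by omega)]
        push_cast
        ring

lemma absLength_c_le (hn : 4 ≤ n) (hc : IsCoxD (n := n) c) :
    PopTsack.absLength (reflD n) c ≤ n :=
  Nat.sInf_le ⟨cList hn, cList_length hn, cList_refl hn, cList_prod hn hc⟩

end Aux
namespace Aux
open SignedPerm PopTsack

variable {n : ℕ}

lemma Rng_abs {j : ℤ} (h : Rng n j) : 1 ≤ |j| ∧ |j| ≤ (n:ℤ) := by
  unfold Rng at h
  rcases abs_cases j with ⟨he, _⟩ | ⟨he, _⟩ <;> omega

lemma abs_val_fst {x : Idx n} : |val x| = (x.1 : ℤ) + 1 := by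
  obtain ⟨i, s⟩ := x
  cases s <;> simp [val, abs] <;> omega

/-- Expressibility set. -/
def ExprSet (n : ℕ) (w : Equiv.Perm (Idx n)) : Set ℕ :=
  {r : ℕ | ∃ l : List (Equiv.Perm (Idx n)), l.length = r ∧ (∀ t ∈ l, t ∈ reflD n) ∧ l.prod = w}

lemma absLength_eq (w : Equiv.Perm (Idx n)) :
    absLength (reflD n) w = sInf (ExprSet n w) := rfl

lemma exprset_inv {w : Equiv.Perm (Idx n)} (h : (ExprSet n w).Nonempty) :
    (ExprSet n w⁻¹).Nonempty := by
  obtain ⟨r, l, hlen, hmem, hprod⟩ := h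
  exact ⟨(l.map fun x => x⁻¹).reverse.length, (l.map fun x => x⁻¹).reverse, rfl,
    fun t ht => by
      rw [List.mem_reverse, List.mem_map] at ht
      obtain ⟨s, hs, rfl⟩ := ht
      exact reflD_inv_mem (hmem s hs),
    by rw [← List.prod_inv_reverse, hprod]⟩

lemma exprset_mul {w₁ w₂ : Equiv.Perm (Idx n)} (h1 : (ExprSet n w₁).Nonempty)
    (h2 : (ExprSet n w₂).Nonempty) : (ExprSet n (w₁ * w₂)).Nonempty := by
  obtain ⟨r1, l1, _, hm1, hp1⟩ := h1
  obtain ⟨r2, l2, _, hm2, hp2⟩ := h2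
  exact ⟨(l1 ++ l2).length, l1 ++ l2, rfl,
    fun t ht => by rcases List.mem_append.mp ht with h | h; exacts [hm1 t h, hm2 t h],
    by rw [List.prod_append, hp1, hp2]⟩

end Aux

open Aux in
/-- Let `n ≥ 4` and let `D_n` be realized as even-signed permutations with
Coxeter element `c = (-1 -2 ⋯ -(n-1) 1 2 ⋯ (n-1))(-n n)`.  Suppose `v ∈ NC(D_n, c)` and
`k ∈ ±[n-1]` satisfies `v(k) ∈ {-n, n}`.  Let `Y` consist of the next `n-1` elements after `k`
in the clockwise cyclic order on `±[n-1]`.  Then no element of `Y` lies in the same cycle of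
`v` as `k`. -/
theorem noncrossing_typeD_cycle_avoids_clockwise_successors {n : ℕ} (hn : 4 ≤ n)
    (c : Equiv.Perm (Idx n)) (hc : IsCoxD c)
    (v : Equiv.Perm (Idx n)) (hv : absLe (reflD n) v c)
    (k : Idx n) (hk : val k ≠ (n : ℤ) ∧ val k ≠ -(n : ℤ))
    (hvk : val (v k) = (n : ℤ) ∨ val (v k) = -(n : ℤ)) :
    ∀ (y : Idx n) (m : ℕ), 1 ≤ m → m ≤ n - 1 →
      val y = (succD n)^[m] (val k) → ¬ v.SameCycle k y := by
  intro y m hm1 hm2 hy hcyc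
  have hn' : 0 < n := by omega
  set u := c * v⁻¹ with hu
  -- expressibility of c, v, u
  have hSc : (ExprSet n c).Nonempty := ⟨n, cList hn, cList_length hn, cList_refl hn,
    cList_prod hn hc⟩
  have hlc_pos : 1 ≤ absLength (reflD n) c := by
    by_contra h
    have h0 : absLength (reflD n) c = 0 := by omega
    rw [absLength_eq] at h0
    rcases (Nat.sInf_eq_zero.mp h0) with h0' | h0'
    · obtain ⟨l, hl, _, hprod⟩ := h0'
      rw [List.length_eq_zero_iff.mp hl] at hprod
      exact c_ne_one hn hc (by rw [← hprod]; rfl)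
    · exact absurd h0' (Set.nonempty_iff_ne_empty.mp hSc)
  have hSv : (ExprSet n v).Nonempty := by
    by_contra hev
    have heu : ¬ (ExprSet n u).Nonempty := by
      intro heu
      have : (ExprSet n (u⁻¹ * c)).Nonempty := exprset_mul (exprset_inv heu) hSc
      have he : u⁻¹ * c = v := by rw [hu]; group
      rw [he] at this
      exact hev this
    unfold absLe at hv
    have hv0 : absLength (reflD n) v = 0 := by
      rw [absLength_eq, Set.not_nonempty_iff_eq_empty.mp hev]
      simp [Nat.sInf_empty]
    have hu0 : absLength (reflD n) u = 0 := by
      rw [absLength_eq, Set.not_nonempty_iff_eq_empty.mp heu]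
      simp [Nat.sInf_empty]
    rw [hv0, hu0] at hv
    omega
  have hSu : (ExprSet n u).Nonempty := exprset_mul hSc (exprset_inv hSv)
  obtain ⟨lv, hlv_len, hlv_mem, hlv_prod⟩ := Nat.sInf_mem hSv
  obtain ⟨lu, hlu_len, hlu_mem, hlu_prod⟩ := Nat.sInf_mem hSu
  -- basic range facts
  have hrk : Rng n (val k) := Rng_val_of_ne hn hk.1 hk.2
  -- the arc points
  set b : ℕ → Idx n := fun i => unval hn' ((succD n)^[i] (val k)) with hb
  have hbval : ∀ i : ℕ, (i:ℤ) ≤ (n:ℤ) - 1 → val (b i) = (succD n)^[i] (val k) := by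
    intro i hi
    have hr := Rng_iter hn hrk hi
    exact val_unval hn' (Rng_abs hr).1 (Rng_abs hr).2
  have hb0 : b 0 = k := val_injective (by rw [hbval 0 (by omega)]; simp)
  have hbm : b m = y := val_injective (by rw [hbval m (by omega), hy])
  have hcb : ∀ i : ℕ, i + 1 ≤ n - 1 → c (b i) = b (i+1) := by
    intro i hi
    have hri : Rng n (val (b i)) := by
      rw [hbval i (by omega)]; exact Rng_iter hn hrk (by omega)
    rw [c_pt hn hc hri]
    apply val_injective
    have hr1 : Rng n (succD n (val (b i))) := (succD_step hn hri).1
    rw [val_unval hn' (Rng_abs hr1).1 (Rng_abs hr1).2,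
      hbval (i+1) (by push_cast; omega), hbval i (by omega),
      Function.iterate_succ_apply']
  -- the functional
  set lam : (Fin n → ℝ) →ₗ[ℝ] ℝ :=
    ∑ i ∈ Finset.range m, (F (v (b i)) - F (b (i+1))) with hlam
  have hA : FixS v ≤ LinearMap.ker lam := by
    intro z hz
    rw [LinearMap.mem_ker, hlam, LinearMap.coe_sum, Finset.sum_apply]
    have hterm : ∀ i ∈ Finset.range m,
        (F (v (b i)) - F (b (i+1))) z = F (b i) z - F (b (i+1)) z := by
      intro i _
      rw [LinearMap.sub_apply, (mem_FixS.mp hz) (b i)]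
    rw [Finset.sum_congr rfl hterm, Finset.sum_range_sub' (fun i => F (b i) z) m]
    obtain ⟨j, hj⟩ := hcyc
    have := FixS_zpow hz j k
    rw [hj] at this
    rw [hb0, hbm, this, sub_self]
  have hB : FixS u ≤ LinearMap.ker lam := by
    intro z hz
    rw [LinearMap.mem_ker, hlam, LinearMap.coe_sum, Finset.sum_apply]
    have hterm : ∀ i ∈ Finset.range m,
        (F (v (b i)) - F (b (i+1))) z = 0 := by
      intro i hi
      rw [Finset.mem_range] at hi
      have h1 := (mem_FixS.mp hz) (v (b i))
      have h2 : u (v (b i)) = c (b i) := by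
        rw [hu]
        show c (v⁻¹ (v (b i))) = c (b i)
        rw [show v⁻¹ (v (b i)) = b i from v.symm_apply_apply _]
      rw [h2, hcb i (by omega)] at h1
      rw [LinearMap.sub_apply, h1, sub_self]
    rw [Finset.sum_congr rfl hterm, Finset.sum_const_zero]
  have hABbot : FixS u ⊓ FixS v = ⊥ := by
    rw [eq_bot_iff, ← FixS_c_bot hn hc]
    refine le_trans (FixS_mul_le u v) ?_
    have : u * v = c := by rw [hu]; group
    rw [this]
  -- nonvanishing of lam
  have hvneg : ∀ x : Idx n, v (neg x) = neg (v x) := by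
    intro x
    rw [← hlv_prod]
    exact prod_refl_neg_comm hlv_mem x
  have hlam_ne : lam ≠ 0 := by
    intro h0
    set e : Fin n → ℝ := fun i => if i = (⟨n-1, by omega⟩ : Fin n) then (1:ℝ) else 0 with he
    have hFe : ∀ a : Idx n, F a e =
        if a.1 = (⟨n-1, by omega⟩ : Fin n) then (if a.2 then (1:ℝ) else -1) else 0 := by
      intro a
      rw [F_apply, he]
      by_cases h : a.1 = (⟨n-1, by omega⟩ : Fin n) <;> simp [h] <;> cases a.2 <;> simp
    have hvk_fst : (v k).1 = (⟨n-1, by omega⟩ : Fin n) := by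
      apply Fin.ext
      have : |val (v k)| = (n:ℤ) := by rcases hvk with h | h <;> rw [h] <;> simp
      rw [abs_val_fst] at this
      simp only []
      omega
    have hbfst : ∀ i : ℕ, 1 ≤ i → (i:ℤ) ≤ (n:ℤ) - 1 → (b i).1 ≠ (⟨n-1, by omega⟩ : Fin n) := by
      intro i h1 h2 hco
      have hr := Rng_iter hn hrk h2
      have habs : |val (b i)| ≤ (n:ℤ) - 1 := by
        rw [hbval i h2]
        unfold Rng at hr
        rcases abs_cases ((succD n)^[i] (val k)) with ⟨hx,_⟩|⟨hx,_⟩ <;> omega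
      rw [abs_val_fst, hco] at habs
      simp at habs
      omega
    have hvbfst : ∀ i : ℕ, 1 ≤ i → i ≤ m - 1 → (v (b i)).1 ≠ (⟨n-1, by omega⟩ : Fin n) := by
      intro i h1 h2 hco
      -- then v (b i) ∈ {v k, v (neg k)}
      have hvnk_fst : (v (neg k)).1 = (⟨n-1, by omega⟩ : Fin n) := by
        rw [hvneg k]; exact hvk_fst
      have hcases : v (b i) = v k ∨ v (b i) = v (neg k) := by
        rcases Bool.eq_false_or_eq_true (v (b i)).2 with hs | hs <;>
        rcases Bool.eq_false_or_eq_true (v k).2 with hs' | hs'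
        · left; exact Prod.ext (by rw [hco, hvk_fst]) (by rw [hs, hs'])
        · right; exact Prod.ext (by rw [hco, hvnk_fst]) (by
            rw [hvneg k]; show (v (b i)).2 = !(v k).2; simp [hs, hs'])
        · right; exact Prod.ext (by rw [hco, hvnk_fst]) (by
            rw [hvneg k]; show (v (b i)).2 = !(v k).2; simp [hs, hs'])
        · left; exact Prod.ext (by rw [hco, hvk_fst]) (by rw [hs, hs'])
      have hne := succD_iter_ne hn hrk (i := i) h1 (by omega)
      rcases hcases with hcase | hcase
      · have : b i = k := v.injective hcase
        have := congrArg val this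
        rw [hbval i (by omega)] at this
        exact hne.1 this
      · have : b i = neg k := v.injective hcase
        have := congrArg val this
        rw [hbval i (by omega), val_neg] at this
        exact hne.2 this
    have heval : lam e = (if (v k).2 then (1:ℝ) else -1) := by
      rw [hlam, LinearMap.coe_sum, Finset.sum_apply]
      have hterm : ∀ i ∈ Finset.range m, (F (v (b i)) - F (b (i+1))) e =
          if i = 0 then (if (v k).2 then (1:ℝ) else -1) else 0 := by
        intro i hi
        rw [Finset.mem_range] at hi
        rw [LinearMap.sub_apply, hFe, hFe]
        rw [if_neg (hbfst (i+1) (by omega) (by push_cast; omega))]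
        by_cases h0 : i = 0
        · rw [if_pos h0, h0, hb0, if_pos hvk_fst, sub_zero]
        · rw [if_neg h0, if_neg (hvbfst i (by omega) (by omega)), sub_zero]
      rw [Finset.sum_congr rfl hterm, Finset.sum_ite_eq' (Finset.range m) 0
        (fun _ => if (v k).2 then (1:ℝ) else -1)]
      rw [if_pos (Finset.mem_range.mpr (by omega))]
    rw [h0] at heval
    simp only [LinearMap.zero_apply] at heval
    cases hq : (v k).2 <;> rw [hq] at heval <;> simp at heval
  -- dimension count
  have hker : Module.finrank ℝ (LinearMap.ker lam) + 1 = n := finrank_ker_of_ne_zero hlam_ne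
  have hsup : FixS u ⊔ FixS v ≤ LinearMap.ker lam := sup_le hB hA
  have hdim := Submodule.finrank_sup_add_finrank_inf_eq (FixS u) (FixS v)
  rw [hABbot, finrank_bot] at hdim
  have hsup_le : Module.finrank ℝ (FixS u ⊔ FixS v : Submodule ℝ (Fin n → ℝ))
      ≤ Module.finrank ℝ (LinearMap.ker lam) := Submodule.finrank_mono hsup
  have hlv_bound := finrank_FixS_prod lv hlv_mem
  have hlu_bound := finrank_FixS_prod lu hlu_mem
  rw [hlv_prod] at hlv_bound
  rw [hlu_prod] at hlu_bound
  have hsum : absLength (reflD n) v + absLength (reflD n) u = absLength (reflD n) c := hv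
  have hc_le : absLength (reflD n) c ≤ n := absLength_c_le hn hc
  rw [absLength_eq, absLength_eq, absLength_eq] at hsum
  rw [absLength_eq] at hc_le
  omega
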